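/- Let r̃ ≥ 1 be an integer and let α(X) = Σ_{j≥0} α_j X^j and h(X) = Σ_{j≥0} h_j X^j be formal power series with nonnegative real coefficients, each having a positive radius of convergence. Then the functional equation v(X) = X·α(X)·(v(X))^{r̃} + h(X) has a unique formal power series solution v(X) = Σ_{j≥0} v_j X^j, this solution has nonnegative coefficients and a positive radius of convergence, and in particular there exist constants C', K' > 0 such that 0 ≤ v_j ≤ C'·K'^j for all j ≥ 0. -/

import Mathlib

open PowerSeries Finset

namespace FEQaux

noncomputable def F (r : ℕ) (α h : PowerSeries ℝ) (u : PowerSeries ℝ) : PowerSeries ℝ :=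
  PowerSeries.X * α * u ^ r + h

lemma contraction {r : ℕ} {α h : PowerSeries ℝ} {n : ℕ} {v w : PowerSeries ℝ}
    (hvw : ∀ j < n, PowerSeries.coeff (R := ℝ) j v = PowerSeries.coeff (R := ℝ) j w) :
    ∀ j < n + 1, PowerSeries.coeff (R := ℝ) j (F r α h v) = PowerSeries.coeff (R := ℝ) j (F r α h w) := by
  have hdvd : (PowerSeries.X : PowerSeries ℝ) ^ n ∣ v - w := by
    rw [PowerSeries.X_pow_dvd_iff]
    intro m hm
    simp [hvw m hm]
  have h2 : (PowerSeries.X : PowerSeries ℝ) ^ (n + 1) ∣ F r α h v - F r α h w := by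
    have heq : F r α h v - F r α h w = PowerSeries.X * α * (v ^ r - w ^ r) := by
      simp only [F]; ring
    rw [heq, pow_succ']
    exact mul_dvd_mul (Dvd.intro α rfl)
      (hdvd.trans (sub_dvd_pow_sub_pow v w r))
  intro j hj
  have h3 := PowerSeries.X_pow_dvd_iff.mp h2 j hj
  rw [map_sub, sub_eq_zero] at h3
  exact h3

lemma stab (r : ℕ) (α h : PowerSeries ℝ) :
    ∀ k, ∀ j, j < k →
      PowerSeries.coeff (R := ℝ) j ((F r α h)^[k] h) = PowerSeries.coeff (R := ℝ) j ((F r α h)^[j + 1] h) := by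
  intro k
  induction k using Nat.strong_induction_on with
  | _ k ih =>
    intro j hj
    match k, hj with
    | (k' + 1), hj =>
      rcases Nat.lt_succ_iff_lt_or_eq.mp hj with hlt | rfl
      · have hag : ∀ i < j, PowerSeries.coeff (R := ℝ) i ((F r α h)^[k'] h)
            = PowerSeries.coeff (R := ℝ) i ((F r α h)^[j] h) := by
          intro i hi
          rw [ih k' (Nat.lt_succ_self _) i (hi.trans hlt),
            ← ih j (Nat.lt_succ_of_lt hlt) i hi]
        have := contraction (r := r) (α := α) (h := h) hag j (Nat.lt_succ_self j)
        simpa [Function.iterate_succ_apply'] using this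
      · rfl

noncomputable def vsol (r : ℕ) (α h : PowerSeries ℝ) : PowerSeries ℝ :=
  PowerSeries.mk fun n => PowerSeries.coeff (R := ℝ) n ((F r α h)^[n + 1] h)

lemma coeff_vsol (r : ℕ) (α h : PowerSeries ℝ) (j : ℕ) :
    PowerSeries.coeff (R := ℝ) j (vsol r α h) = PowerSeries.coeff (R := ℝ) j ((F r α h)^[j + 1] h) := by
  simp [vsol]

lemma agree (r : ℕ) (α h : PowerSeries ℝ) {k j : ℕ} (hj : j < k) :
    PowerSeries.coeff (R := ℝ) j ((F r α h)^[k] h) = PowerSeries.coeff (R := ℝ) j (vsol r α h) := by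
  rw [stab r α h k j hj, coeff_vsol]

lemma vsol_fixed (r : ℕ) (α h : PowerSeries ℝ) : vsol r α h = F r α h (vsol r α h) := by
  ext n
  have hag : ∀ i < n, PowerSeries.coeff (R := ℝ) i ((F r α h)^[n] h)
      = PowerSeries.coeff (R := ℝ) i (vsol r α h) := fun i hi => agree r α h hi
  have := contraction (r := r) (α := α) (h := h) hag n (Nat.lt_succ_self n)
  rw [coeff_vsol, Function.iterate_succ_apply', this]

lemma vsol_unique (r : ℕ) (α h : PowerSeries ℝ) (w : PowerSeries ℝ)
    (hw : w = F r α h w) : w = vsol r α h := by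
  have key : ∀ n, ∀ j < n, PowerSeries.coeff (R := ℝ) j w = PowerSeries.coeff (R := ℝ) j (vsol r α h) := by
    intro n
    induction n with
    | zero => intro j hj; omega
    | succ n ih =>
      intro j hj
      have := contraction (r := r) (α := α) (h := h) ih j hj
      rw [hw, this, ← vsol_fixed]
  ext n
  exact key (n + 1) n (Nat.lt_succ_self n)

lemma coeff_mul_nonneg {f g : PowerSeries ℝ} (hf : ∀ j, 0 ≤ PowerSeries.coeff (R := ℝ) j f)
    (hg : ∀ j, 0 ≤ PowerSeries.coeff (R := ℝ) j g) : ∀ j, 0 ≤ PowerSeries.coeff (R := ℝ) j (f * g) := by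
  intro j
  rw [PowerSeries.coeff_mul]
  exact Finset.sum_nonneg fun p _ => mul_nonneg (hf p.1) (hg p.2)

lemma coeff_pow_nonneg {f : PowerSeries ℝ} (hf : ∀ j, 0 ≤ PowerSeries.coeff (R := ℝ) j f) (r : ℕ) :
    ∀ j, 0 ≤ PowerSeries.coeff (R := ℝ) j (f ^ r) := by
  induction r with
  | zero => intro j; simp [PowerSeries.coeff_one]; positivity
  | succ n ih => intro j; rw [pow_succ]; exact coeff_mul_nonneg ih hf j

lemma coeff_X_nonneg : ∀ j, 0 ≤ PowerSeries.coeff (R := ℝ) j (PowerSeries.X : PowerSeries ℝ) := by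
  intro j; rw [PowerSeries.coeff_X]; split <;> norm_num

lemma coeff_F_nonneg {r : ℕ} {α h u : PowerSeries ℝ} (hα : ∀ j, 0 ≤ PowerSeries.coeff (R := ℝ) j α)
    (hh : ∀ j, 0 ≤ PowerSeries.coeff (R := ℝ) j h) (hu : ∀ j, 0 ≤ PowerSeries.coeff (R := ℝ) j u) :
    ∀ j, 0 ≤ PowerSeries.coeff (R := ℝ) j (F r α h u) := by
  intro j
  simp only [F, map_add]
  exact add_nonneg
    (coeff_mul_nonneg (coeff_mul_nonneg coeff_X_nonneg hα) (coeff_pow_nonneg hu r) j) (hh j)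

lemma vsol_nonneg (r : ℕ) (α h : PowerSeries ℝ) (hα : ∀ j, 0 ≤ PowerSeries.coeff (R := ℝ) j α)
    (hh : ∀ j, 0 ≤ PowerSeries.coeff (R := ℝ) j h) :
    ∀ j, 0 ≤ PowerSeries.coeff (R := ℝ) j (vsol r α h) := by
  have hiter : ∀ k j, 0 ≤ PowerSeries.coeff (R := ℝ) j ((F r α h)^[k] h) := by
    intro k
    induction k with
    | zero => simpa using hh
    | succ n ih =>
      rw [Function.iterate_succ_apply']
      exact coeff_F_nonneg hα hh ih
  intro j
  rw [coeff_vsol]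
  exact hiter (j + 1) j

end FEQaux

namespace FEQaux2

lemma geom_le {x : ℝ} (hx0 : 0 ≤ x) (hx : x ≤ 1 / 2) (n : ℕ) :
    ∑ j ∈ range n, x ^ j ≤ 2 := by
  calc ∑ j ∈ range n, x ^ j ≤ ∑ j ∈ range n, (1 / 2 : ℝ) ^ j :=
        Finset.sum_le_sum fun j _ => pow_le_pow_left₀ hx0 hx j
    _ ≤ 2 := by
        rw [geom_sum_eq (by norm_num)]
        have h2 : (0 : ℝ) ≤ (1 / 2 : ℝ) ^ n := by positivity
        rw [div_le_iff_of_neg (by norm_num : (1 / 2 : ℝ) - 1 < 0)]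
        linarith

lemma sum_coeff_le_eval {Q : Polynomial ℝ} (hQ : ∀ j, 0 ≤ Q.coeff j) {t : ℝ} (ht : 0 ≤ t)
    (m : ℕ) : ∑ j ∈ range m, Q.coeff j * t ^ j ≤ Q.eval t := by
  have hN : Q.natDegree < max m (Q.natDegree + 1) :=
    lt_of_lt_of_le (Nat.lt_succ_self _) (le_max_right _ _)
  rw [Polynomial.eval_eq_sum_range' hN]
  apply Finset.sum_le_sum_of_subset_of_nonneg
  · exact Finset.range_subset_range.mpr (le_max_left _ _)
  · intro i _ _
    exact mul_nonneg (hQ i) (pow_nonneg ht i)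

lemma trunc_dvd (f : PowerSeries ℝ) (n : ℕ) :
    (PowerSeries.X : PowerSeries ℝ) ^ n ∣ f - ↑(trunc n f) := by
  rw [PowerSeries.X_pow_dvd_iff]
  intro m hm
  rw [map_sub, Polynomial.coeff_coe, PowerSeries.coeff_trunc, if_pos hm, sub_self]

lemma coeff_agree_trunc (r n : ℕ) (α v : PowerSeries ℝ) :
    ∀ j < n + 2, PowerSeries.coeff (R := ℝ) j (PowerSeries.X * α * v ^ r)
      = PowerSeries.coeff (R := ℝ) j (PowerSeries.X * ((trunc (n + 2) α : Polynomial ℝ) : PowerSeries ℝ)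
        * ((trunc (n + 1) v : Polynomial ℝ) : PowerSeries ℝ) ^ r) := by
  set A : PowerSeries ℝ := ((trunc (n + 2) α : Polynomial ℝ) : PowerSeries ℝ)
  set P : PowerSeries ℝ := ((trunc (n + 1) v : Polynomial ℝ) : PowerSeries ℝ)
  have h1 : (PowerSeries.X : PowerSeries ℝ) ^ (n + 2)
      ∣ PowerSeries.X * α * v ^ r - PowerSeries.X * A * P ^ r := by
    have key : PowerSeries.X * α * v ^ r - PowerSeries.X * A * P ^ r
        = PowerSeries.X * α * (v ^ r - P ^ r) + (α - A) * (PowerSeries.X * P ^ r) := by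
      ring
    rw [key]
    apply dvd_add
    · rw [pow_succ']
      exact mul_dvd_mul (Dvd.intro α rfl)
        ((trunc_dvd v (n + 1)).trans (sub_dvd_pow_sub_pow v P r))
    · exact Dvd.dvd.mul_right (trunc_dvd α (n + 2)) _
  intro j hj
  have h3 := PowerSeries.X_pow_dvd_iff.mp h1 j hj
  rw [map_sub, sub_eq_zero] at h3
  exact h3

lemma coeff_mul_nonneg' {f g : PowerSeries ℝ} (hf : ∀ j, 0 ≤ PowerSeries.coeff (R := ℝ) j f)
    (hg : ∀ j, 0 ≤ PowerSeries.coeff (R := ℝ) j g) : ∀ j, 0 ≤ PowerSeries.coeff (R := ℝ) j (f * g) := by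
  intro j
  rw [PowerSeries.coeff_mul]
  exact Finset.sum_nonneg fun p _ => mul_nonneg (hf p.1) (hg p.2)

lemma coeff_pow_nonneg' {f : PowerSeries ℝ} (hf : ∀ j, 0 ≤ PowerSeries.coeff (R := ℝ) j f) (r : ℕ) :
    ∀ j, 0 ≤ PowerSeries.coeff (R := ℝ) j (f ^ r) := by
  induction r with
  | zero => intro j; rw [pow_zero, PowerSeries.coeff_one]; split <;> norm_num
  | succ n ih => intro j; rw [pow_succ]; exact coeff_mul_nonneg' ih hf j

lemma coeff_X_nonneg' : ∀ j, 0 ≤ PowerSeries.coeff (R := ℝ) j (PowerSeries.X : PowerSeries ℝ) := by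
  intro j; rw [PowerSeries.coeff_X]; split <;> norm_num

lemma coeff_bound (r : ℕ) (α h v : PowerSeries ℝ)
    (hα0 : ∀ j, 0 ≤ PowerSeries.coeff (R := ℝ) j α)
    (hh0 : ∀ j, 0 ≤ PowerSeries.coeff (R := ℝ) j h)
    (hv0 : ∀ j, 0 ≤ PowerSeries.coeff (R := ℝ) j v)
    (hfix : v = PowerSeries.X * α * v ^ r + h)
    {C K : ℝ} (hC : 0 < C) (hK : 0 < K)
    (hαb : ∀ j, PowerSeries.coeff (R := ℝ) j α ≤ C * K ^ j)
    (hhb : ∀ j, PowerSeries.coeff (R := ℝ) j h ≤ C * K ^ j) :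
    ∃ C' K' : ℝ, 0 < C' ∧ 0 < K' ∧ ∀ j, PowerSeries.coeff (R := ℝ) j v ≤ C' * K' ^ j := by
  set t : ℝ := min (1 / (2 * K)) (((4 * C) ^ r)⁻¹) with htdef
  have ht0 : 0 < t := lt_min (by positivity) (by positivity)
  have hKt : K * t ≤ 1 / 2 := by
    have h1 : t ≤ 1 / (2 * K) := min_le_left _ _
    rw [le_div_iff₀ (by positivity)] at h1
    linarith
  have htr : t * (4 * C) ^ r ≤ 1 := by
    have h1 : t ≤ ((4 * C) ^ r)⁻¹ := min_le_right _ _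
    calc t * (4 * C) ^ r ≤ ((4 * C) ^ r)⁻¹ * (4 * C) ^ r :=
          mul_le_mul_of_nonneg_right h1 (by positivity)
      _ = 1 := by field_simp
  set S : ℕ → ℝ := fun n => ∑ j ∈ range (n + 1), PowerSeries.coeff (R := ℝ) j v * t ^ j with hSdef
  have hS0 : ∀ n, 0 ≤ S n := fun n =>
    Finset.sum_nonneg fun j _ => mul_nonneg (hv0 j) (by positivity)
  have hgeo : ∀ (f : PowerSeries ℝ), (∀ j, PowerSeries.coeff (R := ℝ) j f ≤ C * K ^ j) → ∀ m,
      ∑ j ∈ range m, PowerSeries.coeff (R := ℝ) j f * t ^ j ≤ 2 * C := by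
    intro f hfb m
    calc ∑ j ∈ range m, PowerSeries.coeff (R := ℝ) j f * t ^ j
        ≤ ∑ j ∈ range m, C * (K * t) ^ j := by
          apply Finset.sum_le_sum
          intro j _
          calc PowerSeries.coeff (R := ℝ) j f * t ^ j ≤ C * K ^ j * t ^ j :=
                mul_le_mul_of_nonneg_right (hfb j) (by positivity)
            _ = C * (K * t) ^ j := by rw [mul_pow]; ring
      _ = C * ∑ j ∈ range m, (K * t) ^ j := by rw [Finset.mul_sum]
      _ ≤ C * 2 := mul_le_mul_of_nonneg_left (geom_le (by positivity) hKt m) hC.le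
      _ = 2 * C := by ring
  have hco : ∀ j, PowerSeries.coeff (R := ℝ) j v
      = PowerSeries.coeff (R := ℝ) j (PowerSeries.X * α * v ^ r) + PowerSeries.coeff (R := ℝ) j h := by
    intro j
    conv_lhs => rw [hfix]
    rw [map_add]
  have hSb : ∀ n, S n ≤ 4 * C := by
    intro n
    induction n with
    | zero =>
      have h0 : S 0 = PowerSeries.coeff (R := ℝ) 0 v := by simp [hSdef]
      rw [h0, hco 0]
      have hX0 : PowerSeries.coeff (R := ℝ) 0 (PowerSeries.X * α * v ^ r) = 0 := by
        have : PowerSeries.X * α * v ^ r = PowerSeries.X * (α * v ^ r) := by ring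
        rw [this]
        simp [PowerSeries.coeff_zero_eq_constantCoeff, map_mul]
      rw [hX0, zero_add]
      have := hhb 0
      simp only [pow_zero, mul_one] at this
      linarith
    | succ n ih =>
      set A : Polynomial ℝ := trunc (n + 2) α with hAdef
      set P : Polynomial ℝ := trunc (n + 1) v with hPdef
      set Q : Polynomial ℝ := Polynomial.X * A * P ^ r with hQdef
      have hQcoe : (Q : PowerSeries ℝ) = PowerSeries.X * (A : PowerSeries ℝ)
          * ((P : PowerSeries ℝ)) ^ r := by
        rw [hQdef]
        push_cast
        rfl
      have hA0 : ∀ j, 0 ≤ PowerSeries.coeff (R := ℝ) j (A : PowerSeries ℝ) := by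
        intro j
        rw [Polynomial.coeff_coe, hAdef, PowerSeries.coeff_trunc]
        split
        · exact hα0 j
        · exact le_refl 0
      have hP0 : ∀ j, 0 ≤ PowerSeries.coeff (R := ℝ) j (P : PowerSeries ℝ) := by
        intro j
        rw [Polynomial.coeff_coe, hPdef, PowerSeries.coeff_trunc]
        split
        · exact hv0 j
        · exact le_refl 0
      have hQ0 : ∀ j, 0 ≤ Q.coeff j := by
        intro j
        rw [← Polynomial.coeff_coe, hQcoe]
        exact coeff_mul_nonneg' (coeff_mul_nonneg' coeff_X_nonneg' hA0)
          (coeff_pow_nonneg' hP0 r) j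
      have hQc : ∀ j < n + 2, PowerSeries.coeff (R := ℝ) j (PowerSeries.X * α * v ^ r) = Q.coeff j := by
        intro j hj
        rw [coeff_agree_trunc r n α v j hj, ← Polynomial.coeff_coe, hQcoe]
      -- evaluate A and P
      have hAev : A.eval t = ∑ b ∈ range (n + 2), PowerSeries.coeff (R := ℝ) b α * t ^ b := by
        rw [Polynomial.eval_eq_sum_range' (PowerSeries.natDegree_trunc_lt α (n + 1))]
        apply Finset.sum_congr rfl
        intro b hb
        rw [PowerSeries.coeff_trunc, if_pos (Finset.mem_range.mp hb)]
      have hPev : P.eval t = S n := by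
        rw [Polynomial.eval_eq_sum_range' (PowerSeries.natDegree_trunc_lt v n), hSdef]
        apply Finset.sum_congr rfl
        intro b hb
        rw [PowerSeries.coeff_trunc, if_pos (Finset.mem_range.mp hb)]
      have hAev_le : A.eval t ≤ 2 * C := by rw [hAev]; exact hgeo α hαb (n + 2)
      have hAev_0 : 0 ≤ A.eval t := by
        rw [hAev]
        exact Finset.sum_nonneg fun b _ => mul_nonneg (hα0 b) (by positivity)
      have hsplit : S (n + 1) = (∑ j ∈ range (n + 2),
            PowerSeries.coeff (R := ℝ) j (PowerSeries.X * α * v ^ r) * t ^ j)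
          + ∑ j ∈ range (n + 2), PowerSeries.coeff (R := ℝ) j h * t ^ j := by
        rw [hSdef, ← Finset.sum_add_distrib]
        apply Finset.sum_congr rfl
        intro j _
        rw [hco j, add_mul]
      rw [hsplit]
      have hmain : ∑ j ∈ range (n + 2),
          PowerSeries.coeff (R := ℝ) j (PowerSeries.X * α * v ^ r) * t ^ j ≤ 2 * C := by
        have heq : ∑ j ∈ range (n + 2),
            PowerSeries.coeff (R := ℝ) j (PowerSeries.X * α * v ^ r) * t ^ j
            = ∑ j ∈ range (n + 2), Q.coeff j * t ^ j := by
          apply Finset.sum_congr rfl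
          intro j hj
          rw [hQc j (Finset.mem_range.mp hj)]
        rw [heq]
        calc ∑ j ∈ range (n + 2), Q.coeff j * t ^ j ≤ Q.eval t :=
              sum_coeff_le_eval hQ0 ht0.le (n + 2)
          _ = t * A.eval t * (P.eval t) ^ r := by
              rw [hQdef]; simp [Polynomial.eval_mul, Polynomial.eval_pow]
          _ ≤ t * (2 * C) * (4 * C) ^ r := by
              apply mul_le_mul
              · exact mul_le_mul_of_nonneg_left hAev_le ht0.le
              · rw [hPev]
                exact pow_le_pow_left₀ (hS0 n) ih r
              · rw [hPev]; exact pow_nonneg (hS0 n) r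
              · positivity
          _ = 2 * C * (t * (4 * C) ^ r) := by ring
          _ ≤ 2 * C * 1 := mul_le_mul_of_nonneg_left htr (by positivity)
          _ = 2 * C := by ring
      have hh2 : ∑ j ∈ range (n + 2), PowerSeries.coeff (R := ℝ) j h * t ^ j ≤ 2 * C :=
        hgeo h hhb (n + 2)
      linarith
  refine ⟨4 * C, t⁻¹, by positivity, by positivity, ?_⟩
  intro j
  have h1 : PowerSeries.coeff (R := ℝ) j v * t ^ j ≤ S j := by
    apply Finset.single_le_sum (f := fun i => PowerSeries.coeff (R := ℝ) i v * t ^ i)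
    · intro i _
      exact mul_nonneg (hv0 i) (by positivity)
    · exact Finset.self_mem_range_succ j
  have h2 : PowerSeries.coeff (R := ℝ) j v * t ^ j ≤ 4 * C := h1.trans (hSb j)
  calc PowerSeries.coeff (R := ℝ) j v = PowerSeries.coeff (R := ℝ) j v * t ^ j * (t⁻¹) ^ j := by
        rw [mul_assoc, ← mul_pow, mul_inv_cancel₀ ht0.ne', one_pow, mul_one]
    _ ≤ 4 * C * (t⁻¹) ^ j := mul_le_mul_of_nonneg_right h2 (by positivity)

end FEQaux2


/-- Let `rTilde ≥ 1` and let `α(X), h(X)` be formal power series over `ℝ` with nonnegative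
coefficients and positive radii of convergence (i.e. geometrically bounded coefficients).
Then the functional equation `v = X·α·v^rTilde + h` has a unique formal power series solution,
and this solution has nonnegative coefficients and a positive radius of convergence: there
are `C', K' : ℝ` with `0 ≤ v_j ≤ C'·K'^j` for all `j`. -/
theorem functional_equation_unique_convergent_solution
    (rTilde : ℕ) (hrTilde : 1 ≤ rTilde) (α h : PowerSeries ℝ)
    (hα0 : ∀ j, 0 ≤ PowerSeries.coeff (R := ℝ) j α)
    (hh0 : ∀ j, 0 ≤ PowerSeries.coeff (R := ℝ) j h)
    (hαr : ∃ C K : ℝ, 0 < C ∧ 0 < K ∧ ∀ j, |PowerSeries.coeff (R := ℝ) j α| ≤ C * K ^ j)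
    (hhr : ∃ C K : ℝ, 0 < C ∧ 0 < K ∧ ∀ j, |PowerSeries.coeff (R := ℝ) j h| ≤ C * K ^ j) :
    (∃! v : PowerSeries ℝ, v = PowerSeries.X * α * v ^ rTilde + h) ∧
    ∀ v : PowerSeries ℝ, v = PowerSeries.X * α * v ^ rTilde + h →
      (∀ j, 0 ≤ PowerSeries.coeff (R := ℝ) j v) ∧
      ∃ C' K' : ℝ, 0 < C' ∧ 0 < K' ∧ ∀ j, PowerSeries.coeff (R := ℝ) j v ≤ C' * K' ^ j := by
  obtain ⟨Ca, Ka, hCa, hKa, hba⟩ := hαr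
  obtain ⟨Ch, Kh, hCh, hKh, hbh⟩ := hhr
  set C : ℝ := max Ca Ch with hCdef
  set K : ℝ := max Ka Kh with hKdef
  have hC : 0 < C := lt_of_lt_of_le hCa (le_max_left _ _)
  have hK : 0 < K := lt_of_lt_of_le hKa (le_max_left _ _)
  have hαb : ∀ j, PowerSeries.coeff (R := ℝ) j α ≤ C * K ^ j := by
    intro j
    calc PowerSeries.coeff (R := ℝ) j α ≤ |PowerSeries.coeff (R := ℝ) j α| := le_abs_self _
      _ ≤ Ca * Ka ^ j := hba j
      _ ≤ C * K ^ j :=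
        mul_le_mul (le_max_left _ _) (pow_le_pow_left₀ hKa.le (le_max_left _ _) j)
          (by positivity) hC.le
  have hhb : ∀ j, PowerSeries.coeff (R := ℝ) j h ≤ C * K ^ j := by
    intro j
    calc PowerSeries.coeff (R := ℝ) j h ≤ |PowerSeries.coeff (R := ℝ) j h| := le_abs_self _
      _ ≤ Ch * Kh ^ j := hbh j
      _ ≤ C * K ^ j :=
        mul_le_mul (le_max_right _ _) (pow_le_pow_left₀ hKh.le (le_max_right _ _) j)
          (by positivity) hC.le
  have hfix0 : FEQaux.vsol rTilde α h
      = PowerSeries.X * α * (FEQaux.vsol rTilde α h) ^ rTilde + h :=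
    FEQaux.vsol_fixed rTilde α h
  refine ⟨⟨FEQaux.vsol rTilde α h, hfix0, fun y hy => FEQaux.vsol_unique rTilde α h y hy⟩, ?_⟩
  intro v hveq
  have hvv : v = FEQaux.vsol rTilde α h := FEQaux.vsol_unique rTilde α h v hveq
  have hv0 : ∀ j, 0 ≤ PowerSeries.coeff (R := ℝ) j v := by
    rw [hvv]
    exact FEQaux.vsol_nonneg rTilde α h hα0 hh0
  exact ⟨hv0, FEQaux2.coeff_bound rTilde α h v hα0 hh0 hv0 hveq hC hK hαb hhb⟩
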